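/- Let f be a holomorphic self-map of the open unit disc 𝔻 that is not a conformal automorphism of 𝔻, and let K be a compact subset of 𝔻. Then there exists a constant 0 < k < 1 such that ρ(f(z), f(w)) ≤ k·ρ(z,w) for all z, w ∈ K. -/

import Mathlib

open Complex Set Filter Metric

/-- The open unit disc in the complex plane. -/
def unitDisc : Set ℂ := {z : ℂ | ‖z‖ < 1}

/-- Inverse hyperbolic tangent. -/
noncomputable def artanh (x : ℝ) : ℝ := (1 / 2) * Real.log ((1 + x) / (1 - x))

/-- The hyperbolic distance on the unit disc, induced by the Riemannian metric
`2|dz|/(1-|z|²)`. -/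
noncomputable def hdist (z w : ℂ) : ℝ :=
  2 * artanh (‖(z - w) / (1 - (starRingEnd ℂ) w * z)‖)

/-- Left compositions: `leftComp f n = f (n-1) ∘ ⋯ ∘ f 1 ∘ f 0`, so that `f k`
plays the role of the `(k+1)`-st map `f_{k+1}` of the sequence. -/
def leftComp (f : ℕ → ℂ → ℂ) : ℕ → ℂ → ℂ
  | 0 => id
  | n + 1 => f n ∘ leftComp f n

/-- Right compositions: `rightComp g n = g 0 ∘ g 1 ∘ ⋯ ∘ g (n-1)`, so that `g k`
plays the role of the `(k+1)`-st map `g_{k+1}` of the sequence. -/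
def rightComp (g : ℕ → ℂ → ℂ) : ℕ → ℂ → ℂ
  | 0 => id
  | n + 1 => rightComp g n ∘ g n

namespace SPick

open ComplexConjugate

noncomputable def mob (a z : ℂ) : ℂ := (z - a) / (1 - conj a * z)

lemma den_ne {a z : ℂ} (ha : ‖a‖ < 1) (hz : ‖z‖ < 1) :
    1 - conj a * z ≠ 0 := by
  intro h
  have h1 : conj a * z = 1 := by linear_combination -h
  have : ‖conj a * z‖ < 1 := by
    rw [norm_mul, Complex.norm_conj]
    nlinarith [norm_nonneg a, norm_nonneg z]
  rw [h1, norm_one] at this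
  exact lt_irrefl 1 this

lemma normSq_identity (a z : ℂ) :
    normSq (1 - conj a * z) - normSq (z - a) = (1 - normSq a) * (1 - normSq z) := by
  have h : ((normSq (1 - conj a * z) - normSq (z - a) : ℝ) : ℂ)
      = (((1 - normSq a) * (1 - normSq z) : ℝ) : ℂ) := by
    push_cast
    simp only [← Complex.mul_conj]
    simp only [map_sub, map_mul, map_one, Complex.conj_conj]
    ring
  exact_mod_cast h

lemma abs_num_lt_den {a z : ℂ} (ha : ‖a‖ < 1) (hz : ‖z‖ < 1) :
    ‖z - a‖ < ‖1 - conj a * z‖ := by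
  have h := normSq_identity a z
  have h1 : normSq a < 1 := by rw [← Complex.sq_norm]; nlinarith [norm_nonneg a]
  have h2 : normSq z < 1 := by rw [← Complex.sq_norm]; nlinarith [norm_nonneg z]
  have h3 : normSq (z - a) < normSq (1 - conj a * z) := by nlinarith
  rw [← Complex.sq_norm, ← Complex.sq_norm] at h3
  exact lt_of_pow_lt_pow_left₀ 2 (norm_nonneg _) h3

lemma abs_mob_lt {a z : ℂ} (ha : ‖a‖ < 1) (hz : ‖z‖ < 1) :
    ‖mob a z‖ < 1 := by
  have h := abs_num_lt_den ha hz
  have hd : 0 < ‖1 - conj a * z‖ := lt_of_le_of_lt (norm_nonneg _) h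
  rw [mob, norm_div, div_lt_one hd]
  exact h

lemma mob_self (a : ℂ) : mob a a = 0 := by simp [mob]


lemma one_sub_conj_mul_self_ne {a : ℂ} (ha : ‖a‖ < 1) : 1 - conj a * a ≠ 0 :=
  den_ne ha ha

lemma mob_mob {a z : ℂ} (ha : ‖a‖ < 1) (hz : ‖z‖ < 1) :
    mob (-a) (mob a z) = z := by
  have h1 : 1 - conj a * z ≠ 0 := den_ne ha hz
  have h2 : 1 - conj a * a ≠ 0 := den_ne ha ha
  rw [mob, mob, map_neg]
  rw [div_eq_iff]
  · have h1' : 1 - z * conj a ≠ 0 := by rwa [mul_comm z]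
    field_simp
    ring
  · rw [neg_mul, sub_neg_eq_add]
    intro h
    apply h2
    have h3 : (1 + conj a * ((z - a) / (1 - conj a * z))) * (1 - conj a * z) = 0 := by
      rw [h, zero_mul]
    field_simp at h3
    linear_combination h3

lemma mob_neg_zero (a : ℂ) : mob (-a) 0 = a := by simp [mob]

lemma mapsTo_mob {a : ℂ} (ha : ‖a‖ < 1) :
    MapsTo (mob a) (ball (0:ℂ) 1) (ball (0:ℂ) 1) := by
  intro z hz
  rw [mem_ball_zero_iff] at hz ⊢
  exact abs_mob_lt ha hz

lemma bijOn_mob {a : ℂ} (ha : ‖a‖ < 1) :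
    BijOn (mob a) (ball (0:ℂ) 1) (ball (0:ℂ) 1) := by
  have hneg : ‖-a‖ < 1 := by rwa [norm_neg]
  refine InvOn.bijOn ?_ (mapsTo_mob ha) (mapsTo_mob hneg)
  constructor
  · intro z hz
    exact mob_mob ha (mem_ball_zero_iff.mp hz)
  · intro z hz
    have := mob_mob hneg (mem_ball_zero_iff.mp hz)
    rwa [neg_neg] at this

lemma hasDerivAt_mob (a : ℂ) {z : ℂ} (h : 1 - conj a * z ≠ 0) :
    HasDerivAt (mob a) ((1 - conj a * a) / (1 - conj a * z) ^ 2) z := by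
  have h1 : HasDerivAt (fun w : ℂ => w - a) 1 z := (hasDerivAt_id z).sub_const a
  have h2 : HasDerivAt (fun w : ℂ => 1 - conj a * w) (-(conj a)) z := by
    simpa using ((hasDerivAt_id z).const_mul (conj a)).const_sub 1
  have := h1.div h2 h
  exact this.congr_deriv (by ring)

lemma differentiableOn_mob {a : ℂ} (ha : ‖a‖ < 1) :
    DifferentiableOn ℂ (mob a) (ball (0:ℂ) 1) := fun z hz =>
  (hasDerivAt_mob a (den_ne ha (mem_ball_zero_iff.mp hz))).differentiableAt.differentiableWithinAt


lemma artanh_zero : artanh 0 = 0 := by simp [artanh]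

lemma artanh_nonneg {x : ℝ} (hx : 0 ≤ x) (hx1 : x < 1) : 0 ≤ artanh x := by
  rw [artanh]
  have h1 : (1 : ℝ) ≤ (1 + x) / (1 - x) := by
    rw [le_div_iff₀ (by linarith)]
    linarith
  have := Real.log_nonneg h1
  linarith

lemma artanh_le_artanh {a b : ℝ} (ha : 0 ≤ a) (hab : a ≤ b) (hb : b < 1) :
    artanh a ≤ artanh b := by
  rw [artanh, artanh]
  have h1 : (0:ℝ) < 1 - b := by linarith
  have h2 : (0:ℝ) < 1 - a := by linarith
  have hpos : (0:ℝ) < (1 + a) / (1 - a) := by positivity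
  have hle : (1 + a) / (1 - a) ≤ (1 + b) / (1 - b) := by
    rw [div_le_div_iff₀ h2 h1]
    nlinarith
  have := Real.log_le_log hpos hle
  linarith

lemma hasDerivAt_artanh {x : ℝ} (hx0 : -1 < x) (hx1 : x < 1) :
    HasDerivAt artanh (1 / (1 - x ^ 2)) x := by
  have h1 : (0:ℝ) < 1 - x := by linarith
  have h2 : (0:ℝ) < 1 + x := by linarith
  have hd1 : HasDerivAt (fun y : ℝ => (1 + y) / (1 - y)) (2 / (1 - x) ^ 2) x := by
    have ha : HasDerivAt (fun y : ℝ => 1 + y) 1 x := by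
      simpa using (hasDerivAt_id x).const_add 1
    have hb : HasDerivAt (fun y : ℝ => 1 - y) (-1) x := by
      simpa using (hasDerivAt_id x).const_sub 1
    have := ha.div hb h1.ne'
    exact this.congr_deriv (by ring)
  have hne : (1 + x) / (1 - x) ≠ 0 := by positivity
  have hd2 : HasDerivAt (fun y : ℝ => Real.log ((1 + y) / (1 - y)))
      (2 / (1 - x) ^ 2 / ((1 + x) / (1 - x))) x := hd1.log hne
  have h3 := hd2.const_mul (1 / 2 : ℝ)
  have h4 : HasDerivAt artanh ((1 / 2 : ℝ) * (2 / (1 - x) ^ 2 / ((1 + x) / (1 - x)))) x := h3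
  have h5 : (0:ℝ) < 1 - x ^ 2 := by nlinarith
  convert h4 using 1
  field_simp [h5.ne', h1.ne', h2.ne']
  ring

lemma continuousOn_artanh : ContinuousOn artanh (Ico (0:ℝ) 1) := by
  intro x hx
  exact ((hasDerivAt_artanh (by linarith [hx.1]) hx.2).continuousAt).continuousWithinAt

lemma convexOn_artanh : ConvexOn ℝ (Ico (0:ℝ) 1) artanh := by
  have hD : Convex ℝ (Ico (0:ℝ) 1) := convex_Ico 0 1
  refine MonotoneOn.convexOn_of_deriv hD continuousOn_artanh ?_ ?_
  · intro x hx
    rw [interior_Ico] at hx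
    exact ((hasDerivAt_artanh (by linarith [hx.1]) hx.2).differentiableAt).differentiableWithinAt
  · intro x hx y hy hxy
    rw [interior_Ico] at hx hy
    rw [(hasDerivAt_artanh (by linarith [hx.1]) hx.2).deriv,
      (hasDerivAt_artanh (by linarith [hy.1]) hy.2).deriv]
    have h1 : (0:ℝ) < 1 - x ^ 2 := by nlinarith [hx.1, hx.2]
    have h2 : (0:ℝ) < 1 - y ^ 2 := by nlinarith [hy.1, hy.2]
    rw [div_le_div_iff₀ h1 h2]
    nlinarith [hx.1]

lemma artanh_mul_le {k s : ℝ} (hk0 : 0 ≤ k) (hk1 : k ≤ 1) (hs0 : 0 ≤ s) (hs1 : s < 1) :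
    artanh (k * s) ≤ k * artanh s := by
  have h0 : (0:ℝ) ∈ Ico (0:ℝ) 1 := by constructor <;> norm_num
  have hs : s ∈ Ico (0:ℝ) 1 := ⟨hs0, hs1⟩
  have := convexOn_artanh.2 h0 hs (by linarith : (0:ℝ) ≤ 1 - k) hk0 (by ring)
  simpa [artanh_zero] using this


noncomputable def gmap (f : ℂ → ℂ) (w : ℂ) : ℂ → ℂ := fun ζ => mob (f w) (f (mob (-w) ζ))

variable {f : ℂ → ℂ}

lemma bijOn_rot {c : ℂ} (hc : ‖c‖ = 1) :
    BijOn (fun z => c * z) (ball (0:ℂ) 1) (ball (0:ℂ) 1) := by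
  have hc0 : c ≠ 0 := by
    intro h; rw [h, norm_zero] at hc; norm_num at hc
  have hmaps : ∀ d : ℂ, ‖d‖ = 1 →
      MapsTo (fun z => d * z) (ball (0:ℂ) 1) (ball (0:ℂ) 1) := by
    intro d hd z hz
    rw [mem_ball_zero_iff] at hz ⊢
    simp only [norm_mul, hd, one_mul]
    exact hz
  refine InvOn.bijOn ⟨?_, ?_⟩ (hmaps c hc) (hmaps c⁻¹ (by rw [norm_inv, hc]; norm_num))
  · intro z _; field_simp
  · intro z _; field_simp

section Main

variable (hf : DifferentiableOn ℂ f (ball (0:ℂ) 1))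
  (hfmap : MapsTo f (ball (0:ℂ) 1) (ball (0:ℂ) 1))
  (hnotaut : ¬ BijOn f (ball (0:ℂ) 1) (ball (0:ℂ) 1))

include hf hfmap

lemma gmap_hasimage {w : ℂ} (hw : ‖w‖ < 1) :
    MapsTo (gmap f w) (ball (0:ℂ) 1) (ball (0:ℂ) 1) := by
  intro ζ hζ
  have h1 : mob (-w) ζ ∈ ball (0:ℂ) 1 :=
    mapsTo_mob (by rwa [norm_neg]) hζ
  have h2 := hfmap h1
  exact mapsTo_mob (mem_ball_zero_iff.mp (hfmap (mem_ball_zero_iff.mpr hw))) h2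

lemma gmap_zero {w : ℂ} (hw : ‖w‖ < 1) : gmap f w 0 = 0 := by
  simp [gmap, mob_neg_zero, mob_self]

lemma gmap_diff {w : ℂ} (hw : ‖w‖ < 1) :
    DifferentiableOn ℂ (gmap f w) (ball (0:ℂ) 1) := by
  have h1 : DifferentiableOn ℂ (mob (-w)) (ball (0:ℂ) 1) :=
    differentiableOn_mob (by rwa [norm_neg])
  have hmt : MapsTo (mob (-w)) (ball (0:ℂ) 1) (ball (0:ℂ) 1) :=
    mapsTo_mob (by rwa [norm_neg])
  have h2 : DifferentiableOn ℂ (fun ζ => f (mob (-w) ζ)) (ball (0:ℂ) 1) :=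
    hf.comp h1 hmt
  exact (differentiableOn_mob
    (mem_ball_zero_iff.mp (hfmap (mem_ball_zero_iff.mpr hw)))).comp h2
    (hfmap.comp hmt)

include hnotaut

lemma dslope_lt_one {w : ℂ} (hw : ‖w‖ < 1) {ζ : ℂ} (hζ : ζ ∈ ball (0:ℂ) 1) :
    ‖dslope (gmap f w) 0 ζ‖ < 1 := by
  set g := gmap f w with hg
  have hgd : DifferentiableOn ℂ g (ball (0:ℂ) 1) := gmap_diff hf hfmap hw
  have hg0 : g 0 = 0 := gmap_zero hf hfmap hw
  have hgm : MapsTo g (ball (0:ℂ) 1) (ball (g 0) 1) := by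
    rw [hg0]
    simpa using gmap_hasimage hf hfmap hw
  have hle : ‖dslope g 0 ζ‖ ≤ 1 := by
    have := Complex.norm_dslope_le_div_of_mapsTo_ball hgd (hgm.mono_right ball_subset_closedBall) hζ
    simpa using this
  rcases lt_or_eq_of_le hle with h | h
  · exact h
  exfalso
  have heq : Set.EqOn g (fun z => g 0 + (z - 0) • dslope g 0 ζ) (ball (0:ℂ) 1) :=
    Complex.affine_of_mapsTo_ball_of_exists_norm_dslope_eq_div hgd (hgm.mono_right ball_subset_closedBall) hζ (by simpa using h)
  set c := dslope g 0 ζ with hc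
  have hcabs : ‖c‖ = 1 := h
  apply hnotaut
  have hfw : ‖f w‖ < 1 := mem_ball_zero_iff.mp (hfmap (mem_ball_zero_iff.mpr hw))
  have hbij : BijOn (fun z => mob (-(f w)) (c * mob w z)) (ball (0:ℂ) 1) (ball (0:ℂ) 1) := by
    have b1 := bijOn_mob hw
    have b2 := bijOn_rot hcabs
    have b3 := bijOn_mob (a := -(f w)) (by rwa [norm_neg])
    exact (b3.comp (b2.comp b1))
  refine BijOn.congr hbij ?_
  intro z hz
  have hz1 : ‖z‖ < 1 := mem_ball_zero_iff.mp hz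
  have hmwz : mob w z ∈ ball (0:ℂ) 1 := mapsTo_mob hw hz
  have h1 : g (mob w z) = c * mob w z := by
    rw [heq hmwz, hg0]
    simp [smul_eq_mul, mul_comm]
  have h2 : g (mob w z) = mob (f w) (f z) := by
    rw [hg, gmap]
    rw [mob_mob hw hz1]
  have h3 : mob (-(f w)) (mob (f w) (f z)) = f z :=
    mob_mob hfw (mem_ball_zero_iff.mp (hfmap hz))
  simp only
  rw [← h1, h2, h3]

end Main

section Main2

variable {f : ℂ → ℂ}
variable (hf : DifferentiableOn ℂ f (ball (0:ℂ) 1))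
  (hfmap : MapsTo f (ball (0:ℂ) 1) (ball (0:ℂ) 1))
  (hnotaut : ¬ BijOn f (ball (0:ℂ) 1) (ball (0:ℂ) 1))
include hf hfmap hnotaut

lemma strict_pair {z w : ℂ} (hz : ‖z‖ < 1) (hw : ‖w‖ < 1) (hne : z ≠ w) :
    ‖mob (f w) (f z)‖ < ‖mob w z‖ := by
  have hu : mob w z ∈ ball (0:ℂ) 1 := mapsTo_mob hw (mem_ball_zero_iff.mpr hz)
  have hne0 : mob w z ≠ 0 := by
    rw [mob, div_ne_zero_iff]
    exact ⟨sub_ne_zero.mpr hne, den_ne hw hz⟩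
  have h1 : ‖dslope (gmap f w) 0 (mob w z)‖ < 1 :=
    dslope_lt_one hf hfmap hnotaut hw hu
  have hgu : gmap f w (mob w z) = mob (f w) (f z) := by
    rw [gmap, mob_mob hw hz]
  have hds : dslope (gmap f w) 0 (mob w z) = mob (f w) (f z) / mob w z := by
    rw [dslope_of_ne _ hne0, slope_def_field, gmap_zero hf hfmap hw, hgu, sub_zero, sub_zero]
  have habs : 0 < ‖mob w z‖ := by
    simpa [norm_pos_iff] using hne0
  calc ‖mob (f w) (f z)‖
      = ‖dslope (gmap f w) 0 (mob w z)‖ * ‖mob w z‖ := by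
        rw [hds, norm_div]
        field_simp
    _ < 1 * ‖mob w z‖ := by
        exact mul_lt_mul_of_pos_right h1 habs
    _ = ‖mob w z‖ := one_mul _

lemma strict_G_diag {w : ℂ} (hw : ‖w‖ < 1) :
    ‖deriv f w‖ *
      (‖1 - conj w * w‖ / ‖1 - conj (f w) * f w‖) < 1 := by
  have hfw : ‖f w‖ < 1 := mem_ball_zero_iff.mp (hfmap (mem_ball_zero_iff.mpr hw))
  have hdf : ‖dslope (gmap f w) 0 0‖ < 1 :=
    dslope_lt_one hf hfmap hnotaut hw (mem_ball_zero_iff.mpr (by simpa using one_pos))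
  rw [dslope_same] at hdf
  -- compute deriv (gmap f w) 0
  have hnw : ‖-w‖ < 1 := by rwa [norm_neg]
  have hd1 : HasDerivAt (mob (-w)) (1 - conj w * w) 0 := by
    have h := hasDerivAt_mob (-w) (z := 0) (by simp)
    simpa using h
  have hd2 : HasDerivAt f (deriv f w) w :=
    (hf.differentiableAt (isOpen_ball.mem_nhds (mem_ball_zero_iff.mpr hw))).hasDerivAt
  have hden : 1 - conj (f w) * f w ≠ 0 := den_ne hfw hfw
  have hd3 : HasDerivAt (mob (f w)) ((1 - conj (f w) * f w)⁻¹) (f w) := by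
    have h := hasDerivAt_mob (f w) (z := f w) hden
    convert h using 1
    field_simp
  have e1 : HasDerivAt (f ∘ mob (-w)) (deriv f w * (1 - conj w * w)) 0 := by
    refine HasDerivAt.comp 0 ?_ hd1
    rw [mob_neg_zero]
    exact hd2
  have e2 : HasDerivAt (mob (f w) ∘ (f ∘ mob (-w)))
      ((1 - conj (f w) * f w)⁻¹ * (deriv f w * (1 - conj w * w))) 0 := by
    refine HasDerivAt.comp 0 ?_ e1
    show HasDerivAt (mob (f w)) _ ((f ∘ mob (-w)) 0)
    simp only [Function.comp_apply, mob_neg_zero]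
    exact hd3
  have hcomp : HasDerivAt (gmap f w)
      ((1 - conj (f w) * f w)⁻¹ * (deriv f w * (1 - conj w * w))) 0 := by
    exact e2
  have hderiv : deriv (gmap f w) 0 = (1 - conj (f w) * f w)⁻¹ * (deriv f w * (1 - conj w * w)) :=
    hcomp.deriv
  rw [hderiv] at hdf
  rw [norm_mul, norm_mul, norm_inv] at hdf
  calc ‖deriv f w‖ *
      (‖1 - conj w * w‖ / ‖1 - conj (f w) * f w‖)
      = (‖1 - conj (f w) * f w‖)⁻¹ *
        (‖deriv f w‖ * ‖1 - conj w * w‖) := by ring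
    _ < 1 := hdf


end Main2

end SPick

open SPick ComplexConjugate

/-- **Strict Schwarz–Pick contraction on compact sets.** A holomorphic self-map of 𝔻
that is not a conformal automorphism of 𝔻 (i.e. not a holomorphic bijection of 𝔻 onto
itself) is a strict contraction of the hyperbolic metric on each compact subset of 𝔻. -/
theorem schwarz_pick_strict_contraction_on_compact
    (f : ℂ → ℂ)
    (hf : DifferentiableOn ℂ f unitDisc) (hfmap : MapsTo f unitDisc unitDisc)
    (hnotaut : ¬ BijOn f unitDisc unitDisc)
    (K : Set ℂ) (hKcomp : IsCompact K) (hK : K ⊆ unitDisc) :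
    ∃ k : ℝ, 0 < k ∧ k < 1 ∧
      ∀ z ∈ K, ∀ w ∈ K, hdist (f z) (f w) ≤ k * hdist z w := by
  have hball : unitDisc = ball (0:ℂ) 1 := by
    ext z; simp [unitDisc, mem_ball_zero_iff]
  rw [hball] at hf hfmap hnotaut hK
  rcases K.eq_empty_or_nonempty with rfl | hKne
  · exact ⟨1/2, by norm_num, by norm_num, by simp⟩
  -- the compact ball B containing K
  obtain ⟨x₀, hx₀K, hx₀max⟩ := hKcomp.exists_isMaxOn hKne continuous_norm.continuousOn
  set r := ‖x₀‖ with hr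
  have hr0 : 0 ≤ r := norm_nonneg _
  have hr1 : r < 1 := by
    have := hK hx₀K; rw [mem_ball_zero_iff] at this; exact this
  set B := closedBall (0:ℂ) r with hBdef
  have hKB : K ⊆ B := fun z hz => by
    rw [hBdef, mem_closedBall_zero_iff]; exact hx₀max hz
  have hB1 : ∀ z ∈ B, ‖z‖ < 1 := fun z hz => by
    rw [hBdef, mem_closedBall_zero_iff] at hz; linarith
  have hBball : B ⊆ ball (0:ℂ) 1 := fun z hz =>
    mem_ball_zero_iff.mpr (by exact hB1 z hz)
  have hBcomp : IsCompact B := isCompact_closedBall _ _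
  have hB0 : (0:ℂ) ∈ B := mem_closedBall_self hr0
  have habsf : ∀ z ∈ B, ‖f z‖ < 1 := fun z hz => by
    have := hfmap (hBball hz); rwa [mem_ball_zero_iff] at this
  -- continuity of f and deriv f
  have hfc : ContinuousOn f (ball (0:ℂ) 1) := hf.continuousOn
  have hfder : ContinuousOn (deriv f) (ball (0:ℂ) 1) :=
    ((hf.analyticOnNhd isOpen_ball).deriv).continuousOn
  -- the two-variable-plus-midpoint function G
  set G : ℂ × ℂ × ℂ → ℝ := fun p =>
    ‖deriv f p.1‖ *
      (‖1 - conj p.2.2 * p.2.1‖ / ‖1 - conj (f p.2.2) * f p.2.1‖)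
    with hGdef
  have hGcont : ContinuousOn G (B ×ˢ (B ×ˢ B)) := by
    have m1 : MapsTo (fun p : ℂ × ℂ × ℂ => p.1) (B ×ˢ (B ×ˢ B)) (ball (0:ℂ) 1) :=
      fun p hp => hBball hp.1
    have m2 : MapsTo (fun p : ℂ × ℂ × ℂ => p.2.1) (B ×ˢ (B ×ˢ B)) (ball (0:ℂ) 1) :=
      fun p hp => hBball hp.2.1
    have m3 : MapsTo (fun p : ℂ × ℂ × ℂ => p.2.2) (B ×ˢ (B ×ˢ B)) (ball (0:ℂ) 1) :=
      fun p hp => hBball hp.2.2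
    have c1 : ContinuousOn (fun p : ℂ × ℂ × ℂ => deriv f p.1) (B ×ˢ (B ×ˢ B)) :=
      hfder.comp continuous_fst.continuousOn m1
    have c2 : ContinuousOn (fun p : ℂ × ℂ × ℂ => f p.2.1) (B ×ˢ (B ×ˢ B)) :=
      hfc.comp (continuous_fst.comp continuous_snd).continuousOn m2
    have c3 : ContinuousOn (fun p : ℂ × ℂ × ℂ => f p.2.2) (B ×ˢ (B ×ˢ B)) :=
      hfc.comp (continuous_snd.comp continuous_snd).continuousOn m3
    apply ContinuousOn.mul
    · exact continuous_norm.comp_continuousOn c1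
    · apply ContinuousOn.div
      · exact continuous_norm.comp_continuousOn
          ((continuous_const.sub ((Complex.continuous_conj.comp
            (continuous_snd.comp continuous_snd)).mul
            (continuous_fst.comp continuous_snd))).continuousOn)
      · exact continuous_norm.comp_continuousOn
          (continuousOn_const.sub ((Complex.continuous_conj.comp_continuousOn c3).mul c2))
      · intro p hp
        have := den_ne (habsf _ hp.2.2) (habsf _ hp.2.1)
        simpa [norm_ne_zero_iff] using this
  -- max of G on the diagonal
  have hdiagcont : ContinuousOn (fun w : ℂ => G (w, w, w)) B := by
    apply hGcont.comp (Continuous.continuousOn (by continuity))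
    intro w hw
    exact ⟨hw, hw, hw⟩
  obtain ⟨w₀, hw₀B, hw₀max⟩ := hBcomp.exists_isMaxOn ⟨0, hB0⟩ hdiagcont
  set k₀ := G (w₀, w₀, w₀) with hk₀def
  have hk₀0 : 0 ≤ k₀ := by
    rw [hk₀def, hGdef]
    positivity
  have hk₀1 : k₀ < 1 := strict_G_diag hf hfmap hnotaut (hB1 _ hw₀B)
  set k₂ := (1 + k₀) / 2 with hk₂def
  have hk₂0 : 0 < k₂ := by rw [hk₂def]; linarith
  have hk₂1 : k₂ < 1 := by rw [hk₂def]; linarith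
  have hk₀k₂ : k₀ < k₂ := by rw [hk₂def]; linarith
  -- the "bad" set A away from which G < k₂ along segments
  set S : Set (ℝ × ℂ × ℂ) := (Icc (0:ℝ) 1) ×ˢ (B ×ˢ B) with hSdef
  set γ : ℝ × ℂ × ℂ → ℂ × ℂ × ℂ := fun q => (q.2.2 + q.1 • (q.2.1 - q.2.2), q.2.1, q.2.2)
    with hγdef
  have hγcont : Continuous γ := by
    apply Continuous.prodMk
    · exact (continuous_snd.snd).add (continuous_fst.smul (continuous_snd.fst.sub
        continuous_snd.snd))
    · exact (continuous_snd.fst).prodMk (continuous_snd.snd)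
  have hγmaps : MapsTo γ S (B ×ˢ (B ×ˢ B)) := by
    rintro ⟨t, z, w⟩ ⟨ht, hz, hw⟩
    refine ⟨?_, hz, hw⟩
    have hmem := (convex_closedBall (0:ℂ) r) hw hz
      (by linarith [ht.1, ht.2] : (0:ℝ) ≤ 1 - t) ht.1 (by ring)
    have heq : (1 - t) • w + t • z = w + t • (z - w) := by
      rw [sub_smul, one_smul, smul_sub]
      ring
    rw [heq] at hmem
    exact hmem
  have hScomp : IsCompact S :=
    isCompact_Icc.prod (hBcomp.prod hBcomp)
  have hSclosed : IsClosed S :=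
    isClosed_Icc.prod (IsClosed.prod Metric.isClosed_closedBall Metric.isClosed_closedBall)
  set A := {q ∈ S | k₂ ≤ G (γ q)} with hAdef
  have hGγ : ContinuousOn (G ∘ γ) S := hGcont.comp hγcont.continuousOn hγmaps
  have hAclosed : IsClosed A := by
    have h := hGγ.preimage_isClosed_of_isClosed hSclosed (isClosed_Ici (a := k₂))
    have : A = S ∩ (G ∘ γ) ⁻¹' (Ici k₂) := by
      ext q; simp [hAdef, mem_sep_iff, Function.comp]
    rw [this]
    exact h
  have hAcomp : IsCompact A := hScomp.of_isClosed_subset hAclosed (sep_subset _ _)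
  have hAdiag : ∀ q ∈ A, q.2.1 ≠ q.2.2 := by
    rintro ⟨t, z, w⟩ ⟨⟨ht, hz, hw⟩, hk⟩ h
    simp only at h
    have hγq : γ (t, z, w) = (w, w, w) := by
      rw [hγdef]
      simp [h]
    rw [hγq] at hk
    have hle : G (w, w, w) ≤ k₀ := hw₀max hw
    linarith
  obtain ⟨ε, hε0, hεA⟩ : ∃ ε > 0, ∀ q ∈ A, ε ≤ ‖q.2.1 - q.2.2‖ := by
    rcases A.eq_empty_or_nonempty with hA | hAne
    · exact ⟨1, one_pos, fun q hq => by rw [hA] at hq; exact absurd hq (notMem_empty q)⟩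
    · obtain ⟨q₀, hq₀, hq₀min⟩ := hAcomp.exists_isMinOn hAne
        ((continuous_norm.comp (continuous_snd.fst.sub continuous_snd.snd)).continuousOn)
      refine ⟨‖q₀.2.1 - q₀.2.2‖, ?_, fun q hq => hq₀min hq⟩
      exact norm_pos_iff.mpr (sub_ne_zero.mpr (hAdiag q₀ hq₀))
  -- near-diagonal contraction via the mean value inequality
  have hnear : ∀ z ∈ B, ∀ w ∈ B, ‖z - w‖ < ε →
      ‖mob (f w) (f z)‖ ≤ k₂ * ‖mob w z‖ := by
    intro z hzB w hwB hzw
    have hz1 := hB1 z hzB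
    have hw1 := hB1 w hwB
    have hfz1 := habsf z hzB
    have hfw1 := habsf w hwB
    have hden1 : (1:ℂ) - conj w * z ≠ 0 := den_ne hw1 hz1
    have hden2 : (1:ℂ) - conj (f w) * f z ≠ 0 := den_ne hfw1 hfz1
    have habs1 : 0 < ‖1 - conj w * z‖ := norm_pos_iff.mpr hden1
    have habs2 : 0 < ‖1 - conj (f w) * f z‖ := norm_pos_iff.mpr hden2
    set C := k₂ * ‖1 - conj (f w) * f z‖ / ‖1 - conj w * z‖ with hCdef
    have hsegsub : segment ℝ w z ⊆ B := (convex_closedBall (0:ℂ) r).segment_subset hwB hzB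
    have hsegG : ∀ ζ ∈ segment ℝ w z, ‖deriv f ζ‖ ≤ C := by
      intro ζ hζ
      rw [segment_eq_image'] at hζ
      obtain ⟨t, ht, rfl⟩ := hζ
      have hnotA : (t, z, w) ∉ A := by
        intro hmem
        exact absurd (hεA _ hmem) (not_le.mpr hzw)
      have hmemS : (t, z, w) ∈ S := ⟨ht, hzB, hwB⟩
      have hG : G (γ (t, z, w)) < k₂ := by
        by_contra hcon
        push_neg at hcon
        exact hnotA ⟨hmemS, hcon⟩
      have hγval : γ (t, z, w) = (w + t • (z - w), z, w) := rfl
      rw [hγval, hGdef] at hG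
      simp only at hG
      rw [hCdef, le_div_iff₀ habs1]
      rw [← mul_div_assoc] at hG
      have h2 := (div_lt_iff₀ habs2).mp hG
      simpa using h2.le
    have hC0 : 0 ≤ C := by
      rw [hCdef]
      positivity
    have hmvt : ‖f z - f w‖ ≤ C * ‖z - w‖ := by
      have hder : ∀ x ∈ segment ℝ w z,
          HasFDerivWithinAt f ((fderiv ℂ f x).restrictScalars ℝ) (segment ℝ w z) x := by
        intro x hx
        have hxb : x ∈ ball (0:ℂ) 1 := hBball (hsegsub hx)
        exact ((hf.differentiableAt
          (isOpen_ball.mem_nhds hxb)).hasFDerivAt.restrictScalars ℝ).hasFDerivWithinAt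
      have hbound : ∀ x ∈ segment ℝ w z, ‖(fderiv ℂ f x).restrictScalars ℝ‖ ≤ C := by
        intro x hx
        rw [ContinuousLinearMap.norm_restrictScalars]
        have hxb : x ∈ ball (0:ℂ) 1 := hBball (hsegsub hx)
        have hdd := (hf.differentiableAt (isOpen_ball.mem_nhds hxb)).hasDerivAt
        have heq : fderiv ℂ f x = ContinuousLinearMap.smulRight (1 : ℂ →L[ℂ] ℂ) (deriv f x) :=
          hdd.hasFDerivAt.fderiv
        rw [heq, ContinuousLinearMap.norm_smulRight_apply]
        simp only [ContinuousLinearMap.one_def, ContinuousLinearMap.norm_id, one_mul]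
        exact hsegG x hx
      exact (convex_segment w z).norm_image_sub_le_of_norm_hasFDerivWithin_le hder hbound
        (left_mem_segment ℝ w z) (right_mem_segment ℝ w z)
    have habsfzw : ‖f z - f w‖ ≤ C * ‖z - w‖ := by
      exact hmvt
    have e1 : ‖mob (f w) (f z)‖
        = ‖f z - f w‖ / ‖1 - conj (f w) * f z‖ := by
      rw [mob, norm_div]
    have e2 : ‖mob w z‖ = ‖z - w‖ / ‖1 - conj w * z‖ := by
      rw [mob, norm_div]
    rw [e1, e2]
    calc ‖f z - f w‖ / ‖1 - conj (f w) * f z‖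
        ≤ (C * ‖z - w‖) / ‖1 - conj (f w) * f z‖ := by gcongr
      _ = k₂ * (‖z - w‖ / ‖1 - conj w * z‖) := by
          rw [hCdef]
          field_simp
  -- far-from-diagonal contraction via compactness and strict Schwarz–Pick
  have hfar : ∃ k₃, 0 ≤ k₃ ∧ k₃ < 1 ∧ ∀ z ∈ B, ∀ w ∈ B, ε ≤ ‖z - w‖ →
      ‖mob (f w) (f z)‖ ≤ k₃ * ‖mob w z‖ := by
    set Fs : Set (ℂ × ℂ) := {p : ℂ × ℂ | p.1 ∈ B ∧ p.2 ∈ B} ∩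
      {p : ℂ × ℂ | ε ≤ ‖p.1 - p.2‖} with hFsdef
    have hFclosed : IsClosed Fs := by
      refine IsClosed.inter ?_ ?_
      · exact ((Metric.isClosed_closedBall).preimage continuous_fst).inter
          ((Metric.isClosed_closedBall).preimage continuous_snd)
      · exact isClosed_le continuous_const
          (continuous_norm.comp (continuous_fst.sub continuous_snd))
    have hFcomp : IsCompact Fs := (hBcomp.prod hBcomp).of_isClosed_subset hFclosed
      (fun p hp => ⟨hp.1.1, hp.1.2⟩)
    have hFne_diag : ∀ p ∈ Fs, p.1 ≠ p.2 := by
      rintro ⟨z, w⟩ ⟨_, hd⟩ h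
      rw [Set.mem_setOf_eq] at hd
      simp only at h
      simp only [h, sub_self, norm_zero] at hd
      linarith
    have hmobpos : ∀ p ∈ Fs, 0 < ‖mob p.2 p.1‖ := by
      intro p hp
      apply norm_pos_iff.mpr
      rw [mob, div_ne_zero_iff]
      exact ⟨sub_ne_zero.mpr (hFne_diag p hp), den_ne (hB1 _ hp.1.2) (hB1 _ hp.1.1)⟩
    rcases Fs.eq_empty_or_nonempty with hFe | hFne
    · refine ⟨1/2, by norm_num, by norm_num, fun z hz w hw hd => ?_⟩
      exact absurd (show (z, w) ∈ Fs from ⟨⟨hz, hw⟩, hd⟩) (by rw [hFe]; exact notMem_empty _)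
    · set R : ℂ × ℂ → ℝ := fun p =>
        ‖mob (f p.2) (f p.1)‖ / ‖mob p.2 p.1‖ with hRdef
      have hc1 : ContinuousOn (fun p : ℂ × ℂ => f p.1) Fs :=
        hfc.comp continuous_fst.continuousOn (fun p hp => hBball hp.1.1)
      have hc2 : ContinuousOn (fun p : ℂ × ℂ => f p.2) Fs :=
        hfc.comp continuous_snd.continuousOn (fun p hp => hBball hp.1.2)
      have hRcont : ContinuousOn R Fs := by
        apply ContinuousOn.div
        · apply continuous_norm.comp_continuousOn
          apply ContinuousOn.div
          · exact hc1.sub hc2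
          · exact continuousOn_const.sub ((Complex.continuous_conj.comp_continuousOn hc2).mul hc1)
          · exact fun p hp => den_ne (habsf _ hp.1.2) (habsf _ hp.1.1)
        · apply continuous_norm.comp_continuousOn
          apply ContinuousOn.div
          · exact (continuous_fst.continuousOn).sub (continuous_snd.continuousOn)
          · exact continuousOn_const.sub
              ((Complex.continuous_conj.comp continuous_snd).continuousOn.mul
                continuous_fst.continuousOn)
          · exact fun p hp => den_ne (hB1 _ hp.1.2) (hB1 _ hp.1.1)
        · exact fun p hp => (hmobpos p hp).ne'
      obtain ⟨p₀, hp₀, hp₀max⟩ := hFcomp.exists_isMaxOn hFne hRcont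
      have hk₃1 : R p₀ < 1 := by
        rw [hRdef]
        simp only
        rw [div_lt_one (hmobpos p₀ hp₀)]
        exact strict_pair hf hfmap hnotaut (hB1 _ hp₀.1.1) (hB1 _ hp₀.1.2) (hFne_diag p₀ hp₀)
      have hk₃0 : 0 ≤ R p₀ := by
        rw [hRdef]
        positivity
      refine ⟨R p₀, hk₃0, hk₃1, ?_⟩
      intro z hz w hw hd
      have hmem : (z, w) ∈ Fs := ⟨⟨hz, hw⟩, hd⟩
      have hle : R (z, w) ≤ R p₀ := hp₀max hmem
      rw [hRdef] at hle
      simp only at hle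
      rw [div_le_iff₀ (hmobpos (z, w) hmem)] at hle
      exact hle
  obtain ⟨k₃, hk₃0, hk₃1, hfar⟩ := hfar
  -- combine
  set k' := max k₂ k₃ with hk'def
  have hk'1 : k' < 1 := max_lt hk₂1 hk₃1
  have hk'0 : 0 < k' := lt_of_lt_of_le hk₂0 (le_max_left _ _)
  have hcore : ∀ z ∈ B, ∀ w ∈ B,
      ‖mob (f w) (f z)‖ ≤ k' * ‖mob w z‖ := by
    intro z hz w hw
    rcases lt_or_ge (‖z - w‖) ε with h | h
    · exact (hnear z hz w hw h).trans
        (mul_le_mul_of_nonneg_right (le_max_left _ _) (norm_nonneg _))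
    · exact (hfar z hz w hw h).trans
        (mul_le_mul_of_nonneg_right (le_max_right _ _) (norm_nonneg _))
  refine ⟨k', hk'0, hk'1, ?_⟩
  intro z hzK w hwK
  have hzB := hKB hzK
  have hwB := hKB hwK
  have hz1 := hB1 z hzB
  have hw1 := hB1 w hwB
  have hfz1 := habsf z hzB
  have hfw1 := habsf w hwB
  have hs1 : ‖mob w z‖ < 1 := abs_mob_lt hw1 hz1
  have hs0 : 0 ≤ ‖mob w z‖ := norm_nonneg _
  have hs'0 : 0 ≤ ‖mob (f w) (f z)‖ := norm_nonneg _
  have hmain := hcore z hzB w hwB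
  have hks1 : k' * ‖mob w z‖ < 1 := by nlinarith
  have e1 : hdist (f z) (f w) = 2 * artanh (‖mob (f w) (f z)‖) := rfl
  have e2 : hdist z w = 2 * artanh (‖mob w z‖) := rfl
  rw [e1, e2]
  calc 2 * artanh (‖mob (f w) (f z)‖)
      ≤ 2 * artanh (k' * ‖mob w z‖) := by
        have := artanh_le_artanh hs'0 hmain hks1
        linarith
    _ ≤ 2 * (k' * artanh (‖mob w z‖)) := by
        have := artanh_mul_le hk'0.le hk'1.le hs0 hs1
        linarith
    _ = k' * (2 * artanh (‖mob w z‖)) := by ring
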